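/- arXiv:1902.02555 — 3 statements merged into one kernel-verified Lean document; each statement's English description precedes it below -/
import Mathlib

section
/- For all positive integers k and m, the space of polynomials decomposes as the internal direct sum 𝒫 = ℋ ⊕ Σ_{1 ≤ i ≤ j ≤ k} r²_ij 𝒫: every polynomial P ∈ 𝒫 can be written uniquely as P = H + Σ_{1 ≤ i ≤ j ≤ k} r²_ij Q_ij with H a spherical harmonic and Q_ij ∈ 𝒫 (uniqueness meaning that the subspace ℋ and the subspace Σ_{i ≤ j} r²_ij 𝒫 intersect trivially) (Lemma 1(i)). -/
open MvPolynomial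
open Complex

/-- The mixed Laplacian `Δ_ij = Σ_s ∂_{x^i_s} ∂_{x^j_s}` on polynomials in `k` vector
variables of `ℝ^m`. -/
noncomputable def mixedLap (k m : ℕ) (i j : Fin k)
    (P : MvPolynomial (Fin k × Fin m) ℂ) : MvPolynomial (Fin k × Fin m) ℂ :=
  ∑ s : Fin m, pderiv (i, s) (pderiv (j, s) P)

/-- The polynomial `r²_ij = Σ_s x^i_s x^j_s`. -/
noncomputable def r2 (k m : ℕ) (i j : Fin k) : MvPolynomial (Fin k × Fin m) ℂ :=
  ∑ s : Fin m, X (i, s) * X (j, s)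

/-- `H` is a spherical harmonic if `Δ_ij H = 0` for all `i ≤ j`. -/
def IsSphericalHarmonic (k m : ℕ) (H : MvPolynomial (Fin k × Fin m) ℂ) : Prop :=
  ∀ i j : Fin k, i ≤ j → mixedLap k m i j H = 0

namespace Fischer

variable {σ : Type*} [DecidableEq σ]

noncomputable def w (α : σ →₀ ℕ) : ℕ := α.prod fun _ n => n.factorial

noncomputable def finner (P Q : MvPolynomial σ ℂ) : ℂ :=
  ∑ α ∈ P.support ∪ Q.support,
    (w α : ℂ) * (starRingEnd ℂ) (P.coeff α) * Q.coeff α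

lemma finner_eq_sum {P Q : MvPolynomial σ ℂ} {S : Finset (σ →₀ ℕ)}
    (h : P.support ∪ Q.support ⊆ S) :
    finner P Q = ∑ α ∈ S, (w α : ℂ) * (starRingEnd ℂ) (P.coeff α) * Q.coeff α := by
  refine Finset.sum_subset h fun α _ hα => ?_
  rcases Finset.notMem_union.mp hα with ⟨h1, h2⟩
  rw [MvPolynomial.notMem_support_iff.mp h1]
  simp

lemma finner_add_left (P P' Q : MvPolynomial σ ℂ) :
    finner (P + P') Q = finner P Q + finner P' Q := by
  have hS : ((P + P').support ∪ Q.support) ∪ (P.support ∪ Q.support) ∪ (P'.support ∪ Q.support)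
      ⊆ (P.support ∪ P'.support ∪ Q.support) := by
    intro x hx
    simp only [Finset.mem_union] at hx ⊢
    rcases hx with ((h | h) | h) | h
    · rcases Finset.mem_union.mp (MvPolynomial.support_add h) with h | h
      · exact Or.inl (Or.inl h)
      · exact Or.inl (Or.inr h)
    all_goals tauto
  rw [finner_eq_sum (S := P.support ∪ P'.support ∪ Q.support) (by intro x hx; exact hS (by simp [Finset.mem_union]; simp [Finset.mem_union] at hx; tauto)),
    finner_eq_sum (S := P.support ∪ P'.support ∪ Q.support) (by intro x hx; exact hS (by simp [Finset.mem_union]; simp [Finset.mem_union] at hx; tauto)),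
    finner_eq_sum (S := P.support ∪ P'.support ∪ Q.support) (by intro x hx; exact hS (by simp [Finset.mem_union]; simp [Finset.mem_union] at hx; tauto)),
    ← Finset.sum_add_distrib]
  refine Finset.sum_congr rfl fun α _ => ?_
  rw [MvPolynomial.coeff_add, map_add]
  ring

end Fischer

namespace Fischer
variable {σ : Type*} [DecidableEq σ]

lemma finner_add_right (P Q Q' : MvPolynomial σ ℂ) :
    finner P (Q + Q') = finner P Q + finner P Q' := by
  have key : ∀ R : MvPolynomial σ ℂ, (R = Q + Q' ∨ R = Q ∨ R = Q') →
      finner P R = ∑ α ∈ P.support ∪ Q.support ∪ Q'.support,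
        (w α : ℂ) * (starRingEnd ℂ) (P.coeff α) * R.coeff α := by
    intro R hR
    refine finner_eq_sum ?_
    intro x hx
    simp only [Finset.mem_union] at hx ⊢
    rcases hx with h | h
    · tauto
    · rcases hR with rfl | rfl | rfl
      · rcases Finset.mem_union.mp (MvPolynomial.support_add h) with h | h <;> tauto
      all_goals tauto
  rw [key _ (Or.inl rfl), key Q (by tauto), key Q' (by tauto), ← Finset.sum_add_distrib]
  refine Finset.sum_congr rfl fun α _ => ?_
  rw [MvPolynomial.coeff_add]
  ring

lemma finner_smul_left (P Q : MvPolynomial σ ℂ) (c : ℂ) :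
    finner (c • P) Q = (starRingEnd ℂ) c * finner P Q := by
  rw [finner_eq_sum (S := P.support ∪ Q.support)
      (Finset.union_subset_union_left MvPolynomial.support_smul),
    finner, Finset.mul_sum]
  refine Finset.sum_congr rfl fun α _ => ?_
  rw [MvPolynomial.coeff_smul, smul_eq_mul, map_mul]
  ring

lemma finner_smul_right (P Q : MvPolynomial σ ℂ) (c : ℂ) :
    finner P (c • Q) = c * finner P Q := by
  rw [finner_eq_sum (S := P.support ∪ Q.support)
      (Finset.union_subset_union_right MvPolynomial.support_smul),
    finner, Finset.mul_sum]
  refine Finset.sum_congr rfl fun α _ => ?_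
  rw [MvPolynomial.coeff_smul, smul_eq_mul]
  ring

lemma finner_conj_symm (P Q : MvPolynomial σ ℂ) :
    (starRingEnd ℂ) (finner Q P) = finner P Q := by
  rw [finner, finner, Finset.union_comm, map_sum]
  refine Finset.sum_congr rfl fun α _ => ?_
  rw [map_mul, map_mul, Complex.conj_conj, map_natCast]
  ring

lemma finner_zero_right (P : MvPolynomial σ ℂ) : finner P 0 = 0 := by
  rw [finner]
  refine Finset.sum_eq_zero fun α _ => ?_
  simp

lemma finner_self (P : MvPolynomial σ ℂ) :
    finner P P = ((∑ α ∈ P.support, (w α : ℝ) * Complex.normSq (P.coeff α) : ℝ) : ℂ) := by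
  rw [finner, Finset.union_self, Complex.ofReal_sum]
  refine Finset.sum_congr rfl fun α _ => ?_
  push_cast
  rw [Complex.normSq_eq_conj_mul_self]
  ring

lemma finner_self_nonneg (P : MvPolynomial σ ℂ) : 0 ≤ (finner P P).re := by
  rw [finner_self, Complex.ofReal_re]
  refine Finset.sum_nonneg fun α _ => ?_
  exact mul_nonneg (Nat.cast_nonneg _) (Complex.normSq_nonneg _)

lemma finner_self_eq_zero {P : MvPolynomial σ ℂ} (h : finner P P = 0) : P = 0 := by
  rw [finner_self] at h
  have h0 : (∑ α ∈ P.support, (w α : ℝ) * Complex.normSq (P.coeff α)) = 0 := by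
    exact_mod_cast h
  have hall := (Finset.sum_eq_zero_iff_of_nonneg
    (fun α _ => mul_nonneg (Nat.cast_nonneg _) (Complex.normSq_nonneg _))).mp h0
  ext α
  rcases em (α ∈ P.support) with hα | hα
  · have := hall α hα
    have hw : (0:ℝ) < (w α : ℝ) := by
      have : 0 < w α := Nat.pos_of_ne_zero (by
        simp only [w, Finsupp.prod]
        exact Finset.prod_ne_zero_iff.mpr fun i _ => (Nat.factorial_pos _).ne')
      exact_mod_cast this
    have : Complex.normSq (P.coeff α) = 0 := by
      rcases mul_eq_zero.mp this with h | h
      · exact absurd h hw.ne'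
      · exact h
    simpa [MvPolynomial.coeff_zero] using Complex.normSq_eq_zero.mp this
  · simpa [MvPolynomial.coeff_zero] using MvPolynomial.notMem_support_iff.mp hα

end Fischer

namespace Fischer
variable {σ : Type*} [DecidableEq σ]

lemma w_add_single [Fintype σ] (α : σ →₀ ℕ) (s : σ) :
    w (α + Finsupp.single s 1) = (α s + 1) * w α := by
  set γ : σ →₀ ℕ := α + Finsupp.single s 1 with hγ
  have h1 : w γ = ∏ t : σ, (γ t).factorial := Finsupp.prod_fintype _ _ fun t => rfl
  have h2 : w α = ∏ t : σ, (α t).factorial := Finsupp.prod_fintype _ _ fun t => rfl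
  rw [h1, h2, Fintype.prod_eq_mul_prod_compl s, Fintype.prod_eq_mul_prod_compl s
    (fun t => (α t).factorial)]
  have hs : γ s = α s + 1 := by simp [hγ]
  have hrest : ∀ t ∈ ({s}ᶜ : Finset σ), (γ t).factorial = (α t).factorial := by
    intro t ht
    have h : t ≠ s := by simpa using ht
    simp [hγ, Finsupp.single_apply, h.symm]
  rw [hs, Finset.prod_congr rfl hrest, Nat.factorial_succ]
  ring

lemma finner_monomial (α β : σ →₀ ℕ) (a b : ℂ) :
    finner (monomial α a) (monomial β b)
      = if α = β then (w α : ℂ) * (starRingEnd ℂ) a * b else 0 := by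
  rw [finner_eq_sum (S := ({α, β} : Finset (σ →₀ ℕ))) (by
    refine Finset.union_subset ?_ ?_
    · exact (support_monomial_subset).trans (by simp)
    · exact (support_monomial_subset).trans (by intro x hx; simp at hx; simp [hx]))]
  rcases eq_or_ne α β with rfl | hne
  · have hp : ({α, α} : Finset (σ →₀ ℕ)) = {α} := by simp
    rw [hp, Finset.sum_singleton, if_pos rfl]
    simp [MvPolynomial.coeff_monomial]
  · rw [Finset.sum_pair hne, if_neg hne]
    simp [MvPolynomial.coeff_monomial, hne, hne.symm]

lemma finner_X_mul [Fintype σ] (s : σ) (P Q : MvPolynomial σ ℂ) :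
    finner (X s * P) Q = finner P (pderiv s Q) := by
  induction P using MvPolynomial.induction_on' with
  | add p q hp hq => rw [mul_add, finner_add_left, finner_add_left, hp, hq]
  | monomial α a =>
    induction Q using MvPolynomial.induction_on' with
    | add p q hp hq => rw [map_add, finner_add_right, finner_add_right, hp, hq]
    | monomial β b =>
      rw [MvPolynomial.X, MvPolynomial.monomial_mul, one_mul, MvPolynomial.pderiv_monomial,
        finner_monomial, finner_monomial]
      rcases Nat.eq_zero_or_pos (β s) with hβ | hβ
      · rw [if_neg, hβ]
        · push_cast
          simp
        · intro h
          have h2 := congrArg (fun f : σ →₀ ℕ => f s) h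
          simp [hβ] at h2
      · have hcond : (Finsupp.single s 1 + α = β) ↔ (α = β - Finsupp.single s 1) := by
          constructor
          · rintro rfl
            ext t
            by_cases h : s = t
            · subst h
              simp only [Finsupp.tsub_apply, Finsupp.add_apply, Finsupp.single_eq_same]
              omega
            · simp [Finsupp.tsub_apply, Finsupp.add_apply, Finsupp.single_apply, h]
          · rintro rfl
            ext t
            by_cases h : s = t
            · subst h
              simp only [Finsupp.tsub_apply, Finsupp.add_apply, Finsupp.single_eq_same]
              omega
            · simp [Finsupp.tsub_apply, Finsupp.add_apply, Finsupp.single_apply, h]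
        rcases em (Finsupp.single s 1 + α = β) with hc | hc
        · rw [if_pos hc, if_pos (hcond.mp hc)]
          have hw : w β = (α s + 1) * w α := by
            rw [← hc, add_comm]; exact w_add_single α s
          have hβs : β s = α s + 1 := by
            rw [← hc]
            simp only [Finsupp.add_apply, Finsupp.single_eq_same]
            omega
          rw [hc, hw, hβs]
          push_cast
          ring
        · rw [if_neg hc, if_neg (fun h => hc (hcond.mpr h))]

end Fischer

namespace Fischer
variable {σ : Type*} [DecidableEq σ] [Fintype σ]

lemma totalDegree_pderiv_le (s : σ) (f : MvPolynomial σ ℂ) (n : ℕ)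
    (h : f.totalDegree ≤ n + 1) : (pderiv s f).totalDegree ≤ n := by
  conv_lhs => rw [f.as_sum]
  rw [map_sum]
  refine (MvPolynomial.totalDegree_finset_sum _ _).trans (Finset.sup_le fun α hα => ?_)
  rw [MvPolynomial.pderiv_monomial]
  rcases Nat.eq_zero_or_pos (α s) with h0 | h1
  · rw [h0]
    push_cast
    rw [mul_zero, map_zero]
    exact Nat.zero_le n
  · refine (MvPolynomial.totalDegree_monomial_le _ _).trans ?_
    set δ : σ →₀ ℕ := α - Finsupp.single s 1 with hδ
    have hsum : ∀ γ : σ →₀ ℕ, (γ.sum fun _ e => e) = ∑ t : σ, γ t :=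
      fun γ => Finsupp.sum_fintype _ _ fun _ => rfl
    have hα' : (α.sum fun _ e => e) ≤ n + 1 := (MvPolynomial.le_totalDegree hα).trans h
    have eL : (δ.sum fun _ => (id : ℕ → ℕ)) = ∑ t : σ, δ t :=
      Finsupp.sum_fintype _ _ fun _ => rfl
    rw [hsum] at hα'
    rw [eL]
    have e1 : ∑ t : σ, δ t = (α s - 1) + ∑ t ∈ ({s}ᶜ : Finset σ), α t := by
      rw [Fintype.sum_eq_add_sum_compl s]
      congr 1
      · simp [hδ]
      · refine Finset.sum_congr rfl fun t ht => ?_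
        have h : t ≠ s := by simpa using ht
        simp [hδ, Finsupp.tsub_apply, Finsupp.single_apply, h.symm]
    have e2 : ∑ t : σ, α t = α s + ∑ t ∈ ({s}ᶜ : Finset σ), α t :=
      Fintype.sum_eq_add_sum_compl s _
    omega

lemma finner_zero_left (Q : MvPolynomial σ ℂ) : finner 0 Q = 0 := by
  rw [← finner_conj_symm, finner_zero_right, map_zero]

lemma finner_sum_left {ι : Type*} (S : Finset ι) (f : ι → MvPolynomial σ ℂ)
    (Q : MvPolynomial σ ℂ) : finner (∑ i ∈ S, f i) Q = ∑ i ∈ S, finner (f i) Q := by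
  classical
  induction S using Finset.induction_on with
  | empty => simp [finner_zero_left]
  | insert a s hne ih =>
    rw [Finset.sum_insert hne, Finset.sum_insert hne, finner_add_left, ih]

lemma finner_sum_right {ι : Type*} (S : Finset ι) (f : ι → MvPolynomial σ ℂ)
    (P : MvPolynomial σ ℂ) : finner P (∑ i ∈ S, f i) = ∑ i ∈ S, finner P (f i) := by
  classical
  induction S using Finset.induction_on with
  | empty => simp [finner_zero_right]
  | insert a s hne ih =>
    rw [Finset.sum_insert hne, Finset.sum_insert hne, finner_add_right, ih]

end Fischer

namespace Fischer

lemma finner_r2_mul {k m : ℕ} (i j : Fin k) (P Q : MvPolynomial (Fin k × Fin m) ℂ) :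
    finner (r2 k m i j * P) Q = finner P (mixedLap k m i j Q) := by
  rw [r2, Finset.sum_mul, finner_sum_left, mixedLap, finner_sum_right]
  refine Finset.sum_congr rfl fun s _ => ?_
  have : X (i, s) * X (j, s) * P = X (j, s) * (X (i, s) * P) := by ring
  rw [this, finner_X_mul, finner_X_mul]

lemma totalDegree_r2_le {k m : ℕ} (i j : Fin k) : (r2 k m i j).totalDegree ≤ 2 := by
  rw [r2]
  refine (MvPolynomial.totalDegree_finset_sum _ _).trans (Finset.sup_le fun s _ => ?_)
  refine (MvPolynomial.totalDegree_mul _ _).trans ?_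
  have h1 := MvPolynomial.totalDegree_X (R := ℂ) ((i, s) : Fin k × Fin m)
  have h2 := MvPolynomial.totalDegree_X (R := ℂ) ((j, s) : Fin k × Fin m)
  omega

lemma totalDegree_mixedLap_le {k m : ℕ} (i j : Fin k) (f : MvPolynomial (Fin k × Fin m) ℂ)
    (n : ℕ) (h : f.totalDegree ≤ n + 2) : (mixedLap k m i j f).totalDegree ≤ n := by
  rw [mixedLap]
  refine (MvPolynomial.totalDegree_finset_sum _ _).trans (Finset.sup_le fun s _ => ?_)
  exact totalDegree_pderiv_le _ _ _ (totalDegree_pderiv_le _ _ (n + 1) (by omega))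

end Fischer


set_option synthInstance.maxHeartbeats 1000000 in
set_option maxHeartbeats 2000000 in
/-- Lemma 1(i): `𝒫 = ℋ ⊕ Σ_{1 ≤ i ≤ j ≤ k} r²_ij 𝒫`. Every polynomial `P` can be written
as `P = H + Σ_{i ≤ j} r²_ij Q_ij` with `H` a spherical harmonic, and the subspaces `ℋ`
and `Σ_{i ≤ j} r²_ij 𝒫` intersect trivially. -/
theorem fischer_step (k m : ℕ) (hk : 0 < k) (hm : 0 < m) :
    (∀ P : MvPolynomial (Fin k × Fin m) ℂ,
      ∃ (H : MvPolynomial (Fin k × Fin m) ℂ)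
        (Q : {p : Fin k × Fin k // p.1 ≤ p.2} → MvPolynomial (Fin k × Fin m) ℂ),
        IsSphericalHarmonic k m H ∧
          P = H + ∑ p : {p : Fin k × Fin k // p.1 ≤ p.2}, r2 k m p.1.1 p.1.2 * Q p) ∧
    (∀ H : MvPolynomial (Fin k × Fin m) ℂ, IsSphericalHarmonic k m H →
      (∃ Q : {p : Fin k × Fin k // p.1 ≤ p.2} → MvPolynomial (Fin k × Fin m) ℂ,
        H = ∑ p : {p : Fin k × Fin k // p.1 ≤ p.2}, r2 k m p.1.1 p.1.2 * Q p) →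
      H = 0) := by
  classical
  constructor
  · intro P
    letI core : InnerProductSpace.Core ℂ (MvPolynomial (Fin k × Fin m) ℂ) :=
      { toInner := ⟨Fischer.finner⟩
        conj_inner_symm := Fischer.finner_conj_symm
        re_inner_nonneg := fun x => Fischer.finner_self_nonneg x
        add_left := Fischer.finner_add_left
        smul_left := Fischer.finner_smul_left
        definite := fun _ h => Fischer.finner_self_eq_zero h }
    letI : NormedAddCommGroup (MvPolynomial (Fin k × Fin m) ℂ) := core.toNormedAddCommGroup
    letI : UniformSpace (MvPolynomial (Fin k × Fin m) ℂ) := PseudoMetricSpace.toUniformSpace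
    letI : TopologicalSpace (MvPolynomial (Fin k × Fin m) ℂ) := UniformSpace.toTopologicalSpace
    letI : InnerProductSpace ℂ (MvPolynomial (Fin k × Fin m) ℂ) := InnerProductSpace.ofCore core.toCore
    set N := P.totalDegree with hN
    set T : ({p : Fin k × Fin k // p.1 ≤ p.2} →
          (MvPolynomial.restrictTotalDegree (Fin k × Fin m) ℂ N)) →ₗ[ℂ]
        MvPolynomial (Fin k × Fin m) ℂ :=
      ∑ p : {p : Fin k × Fin k // p.1 ≤ p.2},
        (LinearMap.mulLeft ℂ (r2 k m p.1.1 p.1.2)).comp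
          ((MvPolynomial.restrictTotalDegree (Fin k × Fin m) ℂ N).subtype.comp
            (LinearMap.proj p)) with hTdef
    have hT : ∀ Qf, T Qf = ∑ p : {p : Fin k × Fin k // p.1 ≤ p.2},
        r2 k m p.1.1 p.1.2 * (Qf p : MvPolynomial (Fin k × Fin m) ℂ) := by
      intro Qf
      rw [hTdef]
      simp [LinearMap.sum_apply, LinearMap.mulLeft_apply]
    set K : Submodule ℂ (MvPolynomial (Fin k × Fin m) ℂ) := LinearMap.range T with hK
    haveI : FiniteDimensional ℂ K := inferInstance
    haveI : CompleteSpace K := (Submodule.complete_of_finiteDimensional K).completeSpace_coe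
    have hsup : K ⊔ Kᗮ = ⊤ := Submodule.sup_orthogonal_of_hasOrthogonalProjection
    have hPmem : P ∈ K ⊔ Kᗮ := hsup ▸ Submodule.mem_top
    obtain ⟨w, hwK, h, hhK, hwh⟩ := Submodule.mem_sup.mp hPmem
    obtain ⟨Qf, hQf⟩ := hwK
    have hdegw : w.totalDegree ≤ N + 2 := by
      rw [← hQf, hT]
      refine (MvPolynomial.totalDegree_finset_sum _ _).trans (Finset.sup_le fun p _ => ?_)
      refine (MvPolynomial.totalDegree_mul _ _).trans ?_
      have h1 := Fischer.totalDegree_r2_le (m := m) p.1.1 p.1.2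
      have h2 := (MvPolynomial.mem_restrictTotalDegree (Fin k × Fin m) N
        (Qf p : MvPolynomial (Fin k × Fin m) ℂ)).mp (Qf p).2
      omega
    have hdegh : h.totalDegree ≤ N + 2 := by
      have hh : h = P + (-w) := by rw [← hwh]; ring
      rw [hh]
      refine (MvPolynomial.totalDegree_add _ _).trans ?_
      rw [MvPolynomial.totalDegree_neg]
      exact max_le (by omega) hdegw
    have hharm : IsSphericalHarmonic k m h := by
      intro i j hij
      have hdegD : (mixedLap k m i j h).totalDegree ≤ N :=
        Fischer.totalDegree_mixedLap_le i j h N hdegh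
      have hDK : r2 k m i j * mixedLap k m i j h ∈ K := by
        refine ⟨Pi.single ⟨(i, j), hij⟩
          ⟨mixedLap k m i j h,
            (MvPolynomial.mem_restrictTotalDegree _ _ _).mpr hdegD⟩, ?_⟩
        rw [hT]
        rw [Finset.sum_eq_single (⟨(i, j), hij⟩ : {p : Fin k × Fin k // p.1 ≤ p.2})]
        · rw [Pi.single_eq_same]
        · intro p _ hp
          rw [Pi.single_eq_of_ne hp]
          simp
        · intro hmem
          exact absurd (Finset.mem_univ _) hmem
      have h0 : Fischer.finner (r2 k m i j * mixedLap k m i j h) h = 0 :=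
        (Submodule.mem_orthogonal K h).mp hhK _ hDK
      rw [Fischer.finner_r2_mul] at h0
      exact Fischer.finner_self_eq_zero h0
    refine ⟨h, fun p => (Qf p : MvPolynomial (Fin k × Fin m) ℂ), hharm, ?_⟩
    rw [← hT, hQf, ← hwh]
    ring
  · rintro H hH ⟨Q, hQ⟩
    have h1 : Fischer.finner H H
        = Fischer.finner (∑ p : {p : Fin k × Fin k // p.1 ≤ p.2},
            r2 k m p.1.1 p.1.2 * Q p) H := by rw [← hQ]
    rw [Fischer.finner_sum_left] at h1
    have h2 : Fischer.finner H H = 0 := by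
      rw [h1]
      refine Finset.sum_eq_zero fun p _ => ?_
      rw [Fischer.finner_r2_mul, hH p.1.1 p.1.2 p.2, Fischer.finner_zero_right]
    exact Fischer.finner_self_eq_zero h2
end

section
/- For all positive integers k and m, a nonzero spherical harmonic cannot lie in the subspace Σ_{1 ≤ i ≤ j ≤ k} r²_ij 𝒫; that is, ℋ ∩ (Σ_{1 ≤ i ≤ j ≤ k} r²_ij 𝒫) = {0} (directness part of Lemma 1(i)). -/
open MvPolynomial

namespace FischerAux

variable {σ : Type*} [DecidableEq σ]

/-- weight α! -/
noncomputable def w (α : σ →₀ ℕ) : ℝ := α.prod fun _ n => (n.factorial : ℝ)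

lemma w_pos (α : σ →₀ ℕ) : 0 < w α := by
  apply Finset.prod_pos
  intro i _
  show (0:ℝ) < ((α i).factorial : ℝ)
  exact_mod_cast Nat.factorial_pos _

lemma w_sub {α : σ →₀ ℕ} {s : σ} (h : α s ≠ 0) :
    w α = w (α - Finsupp.single s 1) * (α s : ℝ) := by
  classical
  set β := α - Finsupp.single s 1 with hβ
  have hβs : β s = α s - 1 := by simp [hβ]
  have hβi : ∀ i, i ≠ s → β i = α i := by
    intro i hi
    simp [hβ, Finsupp.single_apply, hi.symm]
  have hsub : β.support ⊆ α.support := by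
    intro i hi
    rcases eq_or_ne i s with rfl | hi'
    · simpa using h
    · simp only [Finsupp.mem_support_iff] at hi ⊢
      rwa [hβi i hi'] at hi
  have hs : s ∈ α.support := Finsupp.mem_support_iff.mpr h
  have hw : w α = ∏ i ∈ α.support, ((α i).factorial : ℝ) := rfl
  have hwβ : w β = ∏ i ∈ α.support, ((β i).factorial : ℝ) :=
    Finsupp.prod_of_support_subset β hsub _ (by simp)
  rw [hw, hwβ, ← Finset.mul_prod_erase _ _ hs, ← Finset.mul_prod_erase _ _ hs]
  have hprod : ∏ i ∈ α.support.erase s, ((β i).factorial : ℝ)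
      = ∏ i ∈ α.support.erase s, ((α i).factorial : ℝ) := by
    apply Finset.prod_congr rfl
    intro i hi
    rw [hβi i (Finset.ne_of_mem_erase hi)]
  rw [hprod, hβs]
  have : (α s).factorial = α s * (α s - 1).factorial := by
    obtain ⟨n, hn⟩ := Nat.exists_eq_succ_of_ne_zero h
    rw [hn]
    simp [Nat.factorial_succ]
  rw [this]
  push_cast
  ring

/-- Fischer pairing. -/
noncomputable def B (P Q : MvPolynomial σ ℂ) : ℂ :=
  ∑ α ∈ P.support, (w α : ℂ) * (starRingEnd ℂ) (coeff α P) * coeff α Q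

lemma B_eq_sum {P : MvPolynomial σ ℂ} {t : Finset (σ →₀ ℕ)} (h : P.support ⊆ t)
    (Q : MvPolynomial σ ℂ) :
    B P Q = ∑ α ∈ t, (w α : ℂ) * (starRingEnd ℂ) (coeff α P) * coeff α Q := by
  refine Finset.sum_subset h fun α _ hα => ?_
  rw [notMem_support_iff.mp hα]
  simp

lemma B_add_left (P P' Q : MvPolynomial σ ℂ) : B (P + P') Q = B P Q + B P' Q := by
  classical
  set t := (P + P').support ∪ (P.support ∪ P'.support) with ht
  rw [B_eq_sum (t := t) Finset.subset_union_left,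
    B_eq_sum (t := t) (Finset.subset_union_left.trans Finset.subset_union_right),
    B_eq_sum (t := t) (Finset.subset_union_right.trans Finset.subset_union_right),
    ← Finset.sum_add_distrib]
  apply Finset.sum_congr rfl
  intro α _
  rw [coeff_add, map_add]
  ring

lemma B_monomial_left (u : σ →₀ ℕ) (a : ℂ) (Q : MvPolynomial σ ℂ) :
    B (monomial u a) Q = (w u : ℂ) * (starRingEnd ℂ) a * coeff u Q := by
  classical
  rcases eq_or_ne a 0 with rfl | ha
  · simp [B]
  · rw [B, support_monomial, if_neg ha, Finset.sum_singleton, coeff_monomial, if_pos rfl]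

lemma B_X_mul (P Q : MvPolynomial σ ℂ) (s : σ) :
    B P (X s * Q) = B (pderiv s P) Q := by
  classical
  induction P using MvPolynomial.induction_on' with
  | add p q hp hq => rw [B_add_left, map_add, B_add_left, hp, hq]
  | monomial u a =>
    rw [B_monomial_left, pderiv_monomial, B_monomial_left, coeff_X_mul']
    rcases eq_or_ne (u s) 0 with h | h
    · rw [if_neg (by simp [Finsupp.mem_support_iff, h]), h]
      simp
    · rw [if_pos (Finsupp.mem_support_iff.mpr h), w_sub h, map_mul, map_natCast]
      push_cast
      ring

lemma B_sum_left {ι : Type*} (t : Finset ι) (f : ι → MvPolynomial σ ℂ)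
    (Q : MvPolynomial σ ℂ) : B (∑ i ∈ t, f i) Q = ∑ i ∈ t, B (f i) Q := by
  classical
  induction t using Finset.cons_induction with
  | empty => simp [B]
  | cons i t hi ih => rw [Finset.sum_cons, Finset.sum_cons, B_add_left, ih]

lemma B_sum_right {ι : Type*} (t : Finset ι) (P : MvPolynomial σ ℂ)
    (f : ι → MvPolynomial σ ℂ) : B P (∑ i ∈ t, f i) = ∑ i ∈ t, B P (f i) := by
  simp only [B, coeff_sum, Finset.mul_sum]
  exact Finset.sum_comm

lemma eq_zero_of_B_self (P : MvPolynomial σ ℂ) (h : B P P = 0) : P = 0 := by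
  classical
  have h2 : B P P = ((∑ α ∈ P.support, w α * Complex.normSq (coeff α P) : ℝ) : ℂ) := by
    rw [B]
    push_cast
    apply Finset.sum_congr rfl
    intro α _
    rw [mul_assoc, Complex.normSq_eq_conj_mul_self]
  rw [h2, Complex.ofReal_eq_zero] at h
  have hnn : ∀ α ∈ P.support, 0 ≤ w α * Complex.normSq (coeff α P) := fun α _ =>
    mul_nonneg (w_pos α).le (Complex.normSq_nonneg _)
  rw [Finset.sum_eq_zero_iff_of_nonneg hnn] at h
  rw [MvPolynomial.eq_zero_iff]
  intro d
  by_contra hd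
  have hmem : d ∈ P.support := mem_support_iff.mpr hd
  have := h d hmem
  have hns : Complex.normSq (coeff d P) ≠ 0 := fun hc => hd (Complex.normSq_eq_zero.mp hc)
  exact (mul_ne_zero (w_pos d).ne' hns) this

end FischerAux


/-- Directness part of Lemma 1(i): a spherical harmonic lying in the subspace
`Σ_{1 ≤ i ≤ j ≤ k} r²_ij 𝒫` must be zero. -/
theorem harmonic_inter_trivial (k m : ℕ) (hk : 0 < k) (hm : 0 < m)
    (H : MvPolynomial (Fin k × Fin m) ℂ) (hH : IsSphericalHarmonic k m H)
    (Q : {p : Fin k × Fin k // p.1 ≤ p.2} → MvPolynomial (Fin k × Fin m) ℂ)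
    (hQ : H = ∑ p : {p : Fin k × Fin k // p.1 ≤ p.2}, r2 k m p.1.1 p.1.2 * Q p) :
    H = 0 := by
  classical
  apply FischerAux.eq_zero_of_B_self
  nth_rewrite 2 [hQ]
  rw [FischerAux.B_sum_right]
  apply Finset.sum_eq_zero
  intro p _
  have hr : r2 k m p.1.1 p.1.2 * Q p
      = ∑ s : Fin m, X (p.1.2, s) * (X (p.1.1, s) * Q p) := by
    rw [r2, Finset.sum_mul]
    apply Finset.sum_congr rfl
    intro s _
    ring
  rw [hr, FischerAux.B_sum_right]
  have hterm : ∀ s : Fin m, FischerAux.B H (X (p.1.2, s) * (X (p.1.1, s) * Q p))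
      = FischerAux.B (pderiv (p.1.1, s) (pderiv (p.1.2, s) H)) (Q p) := by
    intro s
    rw [FischerAux.B_X_mul, FischerAux.B_X_mul]
  rw [Finset.sum_congr rfl fun s _ => hterm s, ← FischerAux.B_sum_left]
  have heq : (∑ s : Fin m, pderiv (p.1.1, s) (pderiv (p.1.2, s) H))
      = mixedLap k m p.1.1 p.1.2 H := rfl
  rw [heq, hH p.1.1 p.1.2 p.2]
  simp [FischerAux.B]
end

section
/- The space ℋ of spherical harmonics is invariant under all mixed Euler operators: if H ∈ 𝒫 satisfies Δ_st H = 0 for all 1 ≤ s ≤ t ≤ k, then for every 1 ≤ i, j ≤ k the polynomial E_ij H, where E_ij = Σ_{s=1}^m x^i_s ∂_{x^j_s}, also satisfies Δ_st (E_ij H) = 0 for all 1 ≤ s ≤ t ≤ k (so ℋ is a module for the Lie algebra gl(k) generated by the mixed Euler operators). -/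
open MvPolynomial

lemma pderiv_comm' {σ : Type*} [DecidableEq σ] (i j : σ) (f : MvPolynomial σ ℂ) :
    pderiv i (pderiv j f) = pderiv j (pderiv i f) := by
  induction f using MvPolynomial.induction_on' with
  | monomial s a =>
    simp only [pderiv_monomial]
    rcases eq_or_ne i j with rfl | h
    · rfl
    · congr 1
      · rw [tsub_right_comm]
      · rw [Finsupp.tsub_apply, Finsupp.tsub_apply, Finsupp.single_apply,
          Finsupp.single_apply, if_neg h, if_neg (Ne.symm h)]
        push_cast [Nat.sub_zero]; ring
  | add p q hp hq => simp [hp, hq]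

lemma pderiv_pderiv_X_mul {σ : Type*} [DecidableEq σ] (a b c : σ)
    (Q : MvPolynomial σ ℂ) :
    pderiv a (pderiv b (X c * Q)) =
      (if a = c then pderiv b Q else 0) + (if b = c then pderiv a Q else 0)
        + X c * pderiv a (pderiv b Q) := by
  rcases eq_or_ne b c with rfl | hb
  · rcases eq_or_ne a b with rfl | ha
    · simp [pderiv_mul]; ring
    · simp [pderiv_mul, pderiv_X_of_ne (Ne.symm ha), ha]; ring
  · rcases eq_or_ne a c with rfl | ha
    · simp [pderiv_mul, pderiv_X_of_ne (Ne.symm hb), hb]; ring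
    · simp [pderiv_mul, pderiv_X_of_ne (Ne.symm hb), pderiv_X_of_ne (Ne.symm ha), ha, hb]


/-- The mixed Euler operator `E_ij = Σ_s x^i_s ∂_{x^j_s}`. -/
noncomputable def mixedEuler (k m : ℕ) (i j : Fin k) (P : MvPolynomial (Fin k × Fin m) ℂ) :
    MvPolynomial (Fin k × Fin m) ℂ :=
  ∑ s : Fin m, X (i, s) * pderiv (j, s) P

lemma mixedLap_symm (k m : ℕ) (a b : Fin k) (P : MvPolynomial (Fin k × Fin m) ℂ) :
    mixedLap k m a b P = mixedLap k m b a P := by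
  simp [mixedLap, pderiv_comm']

lemma harmonic_all {k m : ℕ} {H : MvPolynomial (Fin k × Fin m) ℂ}
    (hH : IsSphericalHarmonic k m H) (a b : Fin k) : mixedLap k m a b H = 0 := by
  rcases le_total a b with h | h
  · exact hH a b h
  · rw [mixedLap_symm]; exact hH b a h

/-- The space `ℋ` of spherical harmonics is invariant under all mixed Euler operators:
if `H` is a spherical harmonic, then so is `E_ij H` for every `i, j`. -/
theorem sphericalHarmonic_mixedEuler_invariant (k m : ℕ) (hk : 0 < k) (hm : 0 < m)
    (H : MvPolynomial (Fin k × Fin m) ℂ) (hH : IsSphericalHarmonic k m H) (i j : Fin k) :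
    IsSphericalHarmonic k m (mixedEuler k m i j H) := by
  intro s t _
  have key : ∀ u : Fin m,
      pderiv (s, u) (pderiv (t, u) (mixedEuler k m i j H)) =
        (if s = i then pderiv ((t, u) : Fin k × Fin m) (pderiv (j, u) H) else 0)
        + (if t = i then pderiv ((s, u) : Fin k × Fin m) (pderiv (j, u) H) else 0)
        + ∑ v : Fin m, X ((i, v) : Fin k × Fin m) *
            pderiv (s, u) (pderiv (t, u) (pderiv (j, v) H)) := by
    intro u
    rw [mixedEuler, map_sum, map_sum]
    rw [Finset.sum_congr rfl fun v _ => pderiv_pderiv_X_mul (s, u) (t, u) (i, v) _]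
    rw [Finset.sum_add_distrib, Finset.sum_add_distrib]
    congr 1
    congr 1
    · simp [Prod.ext_iff, ite_and]
    · simp [Prod.ext_iff, ite_and]
  have hcomm : ∀ v : Fin m, ∑ u : Fin m,
      pderiv ((s, u) : Fin k × Fin m) (pderiv (t, u) (pderiv (j, v) H)) =
      pderiv ((j, v) : Fin k × Fin m) (mixedLap k m s t H) := by
    intro v
    rw [mixedLap, map_sum]
    exact Finset.sum_congr rfl fun u _ => by
      rw [pderiv_comm' (t, u) (j, v), pderiv_comm' (s, u) (j, v)]
  rw [mixedLap]
  rw [Finset.sum_congr rfl fun u _ => key u]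
  rw [Finset.sum_add_distrib, Finset.sum_add_distrib]
  have h1 : ∑ u : Fin m, (if s = i then pderiv ((t, u) : Fin k × Fin m) (pderiv (j, u) H)
      else 0) = 0 := by
    split_ifs
    · exact harmonic_all hH t j
    · simp
  have h2 : ∑ u : Fin m, (if t = i then pderiv ((s, u) : Fin k × Fin m) (pderiv (j, u) H)
      else 0) = 0 := by
    split_ifs
    · exact harmonic_all hH s j
    · simp
  rw [h1, h2, Finset.sum_comm]
  simp only [← Finset.mul_sum, hcomm, harmonic_all hH s t, map_zero, mul_zero,
    Finset.sum_const_zero, add_zero, zero_add]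
end
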